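/- Let d ≥ 1, m ≥ 1 be natural numbers, and let q satisfy 1 ≤ q < 2 if d = 1, and 2d/(d+2m) < q < 2 if d ≥ 2. Set α = 1/q - 1/2. Then there exists a constant C > 0 such that for every measurable f : ℝ^d → ℂ with f ∈ L²(ℝ^d) and |x|^m f ∈ L²(ℝ^d), one has ‖f‖_{L^q} ≤ C ‖f‖_{L²}^{1 - dα/m} ‖|x|^m f‖_{L²}^{dα/m}. -/

import Mathlib

open MeasureTheory

open Real ENNReal Module


variable {E : Type*} [NormedAddCommGroup E] [NormedSpace ℝ E] [MeasurableSpace E] [BorelSpace E]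
  [FiniteDimensional ℝ E]

omit [NormedSpace ℝ E] [MeasurableSpace E] [BorelSpace E] [FiniteDimensional ℝ E] in
lemma g1_cont (m : ℕ) : Continuous (fun x : E => (1 + ‖x‖ ^ m)⁻¹) :=
  (continuous_const.add (continuous_norm.pow m)).inv₀ (fun x => (by positivity : (0:ℝ) < 1 + ‖x‖ ^ m).ne')

omit [NormedSpace ℝ E] [MeasurableSpace E] [BorelSpace E] [FiniteDimensional ℝ E] in
lemma g1_bound (m : ℕ) (x : E) :
    (1 + ‖x‖ ^ m)⁻¹ ≤ 2 ^ m * (1 + ‖x‖) ^ (-(m : ℝ)) := by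
  have ht : (0:ℝ) ≤ ‖x‖ := norm_nonneg x
  have h1 : (0:ℝ) < 1 + ‖x‖ ^ m := by positivity
  have h2 : (0:ℝ) < (1 + ‖x‖) ^ m := by positivity
  rw [Real.rpow_neg (by positivity), Real.rpow_natCast, ← div_eq_mul_inv, ← one_div,
    div_le_div_iff₀ h1 h2, one_mul]
  rcases le_total ‖x‖ 1 with h | h
  · calc (1 + ‖x‖) ^ m ≤ 2 ^ m := by
          apply pow_le_pow_left₀ (by positivity); linarith
    _ ≤ 2 ^ m * (1 + ‖x‖ ^ m) := by
          nlinarith [pow_nonneg ht m, pow_pos (by norm_num : (0:ℝ) < 2) m]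
  · calc (1 + ‖x‖) ^ m ≤ (2 * ‖x‖) ^ m := by
          apply pow_le_pow_left₀ (by positivity); linarith
    _ = 2 ^ m * ‖x‖ ^ m := mul_pow 2 ‖x‖ m
    _ ≤ 2 ^ m * (1 + ‖x‖ ^ m) := by
          have : (0:ℝ) < 2 ^ m := by positivity
          nlinarith

lemma g1_mem (μ : Measure E) [μ.IsAddHaarMeasure] (m : ℕ) {r : ℝ≥0∞}
    (hr0 : r ≠ 0) (hrt : r ≠ ∞) (hdr : (finrank ℝ E : ℝ) < m * r.toReal) :
    MemLp (fun x : E => (1 + ‖x‖ ^ m)⁻¹) r μ := by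
  have hrR : 0 < r.toReal := ENNReal.toReal_pos hr0 hrt
  refine ⟨(g1_cont m).aestronglyMeasurable, ?_⟩
  rw [eLpNorm_eq_lintegral_rpow_enorm_toReal hr0 hrt]
  refine ENNReal.rpow_lt_top_of_nonneg (by positivity) (ne_of_lt ?_)
  have hbound : ∀ x : E, ‖(1 + ‖x‖ ^ m)⁻¹‖ₑ ^ r.toReal ≤
      ENNReal.ofReal ((2:ℝ) ^ ((m:ℝ) * r.toReal) * (1 + ‖x‖) ^ (-((m:ℝ) * r.toReal))) := by
    intro x
    have hg0 : (0:ℝ) ≤ (1 + ‖x‖ ^ m)⁻¹ := by positivity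
    rw [Real.enorm_eq_ofReal hg0, ENNReal.ofReal_rpow_of_nonneg hg0 hrR.le]
    apply ENNReal.ofReal_le_ofReal
    calc ((1 + ‖x‖ ^ m)⁻¹) ^ r.toReal ≤ (2 ^ m * (1 + ‖x‖) ^ (-(m:ℝ))) ^ r.toReal := by
            apply Real.rpow_le_rpow hg0 (g1_bound m x) hrR.le
      _ = (2:ℝ) ^ ((m:ℝ) * r.toReal) * (1 + ‖x‖) ^ (-((m:ℝ) * r.toReal)) := by
            rw [Real.mul_rpow (by positivity) (by positivity),
              ← Real.rpow_natCast (2:ℝ) m, ← Real.rpow_mul (by norm_num),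
              ← Real.rpow_mul (by positivity), neg_mul]
  calc (∫⁻ x, ‖(1 + ‖x‖ ^ m)⁻¹‖ₑ ^ r.toReal ∂μ)
      ≤ ∫⁻ x, ENNReal.ofReal ((2:ℝ) ^ ((m:ℝ) * r.toReal) * (1 + ‖x‖) ^ (-((m:ℝ) * r.toReal))) ∂μ :=
        lintegral_mono hbound
    _ = ENNReal.ofReal ((2:ℝ) ^ ((m:ℝ) * r.toReal)) *
        ∫⁻ x, ENNReal.ofReal ((1 + ‖x‖) ^ (-((m:ℝ) * r.toReal))) ∂μ := by
        simp_rw [ENNReal.ofReal_mul (by positivity : (0:ℝ) ≤ (2:ℝ) ^ ((m:ℝ) * r.toReal))]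
        rw [lintegral_const_mul' _ _ ENNReal.ofReal_ne_top]
    _ < ∞ := ENNReal.mul_lt_top ENNReal.ofReal_lt_top (finite_integral_one_add_norm hdr)

lemma g1_scale (μ : Measure E) [μ.IsAddHaarMeasure] (m : ℕ) {r : ℝ≥0∞} (hrt : r ≠ ∞) {R : ℝ}
    (hR : 0 < R) :
    eLpNorm (fun x : E => (1 + ‖(R⁻¹ : ℝ) • x‖ ^ m)⁻¹) r μ =
      ENNReal.ofReal (R ^ finrank ℝ E) ^ (1 / r).toReal *
        eLpNorm (fun x : E => (1 + ‖x‖ ^ m)⁻¹) r μ := by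
  have h1 : Measure.map (((R⁻¹ : ℝ)) • · : E → E) μ = ENNReal.ofReal (R ^ finrank ℝ E) • μ := by
    rw [Measure.map_addHaar_smul μ (inv_ne_zero hR.ne')]
    congr 1
    rw [inv_pow, inv_inv, abs_of_nonneg (by positivity)]
  have h2 := eLpNorm_map_measure (p := r) (μ := μ) (f := (((R⁻¹ : ℝ)) • · : E → E))
      (g1_cont m).aestronglyMeasurable ((measurable_const_smul (R⁻¹ : ℝ)).aemeasurable)
  rw [h1] at h2
  rw [show (fun x : E => (1 + ‖(R⁻¹ : ℝ) • x‖ ^ m)⁻¹) =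
      ((fun x : E => (1 + ‖x‖ ^ m)⁻¹) ∘ (((R⁻¹ : ℝ)) • · : E → E)) from rfl, ← h2,
    eLpNorm_smul_measure_of_ne_top hrt, smul_eq_mul]

/-- Weighted interpolation inequality (dual Gagliardo–Nirenberg). -/
theorem stmt0 (d m : ℕ) (hd : 1 ≤ d) (hm : 1 ≤ m) (q α : ℝ)
    (hq : (d = 1 ∧ 1 ≤ q ∧ q < 2) ∨
      (2 ≤ d ∧ 2 * (d : ℝ) / ((d : ℝ) + 2 * m) < q ∧ q < 2))
    (hα : α = 1 / q - 1 / 2) :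
    ∃ C > 0, ∀ f : EuclideanSpace ℝ (Fin d) → ℂ,
      MemLp f 2 volume →
      MemLp (fun x => (‖x‖ ^ m : ℝ) • f x) 2 volume →
      MemLp f (ENNReal.ofReal q) volume ∧
      (eLpNorm f (ENNReal.ofReal q) volume).toReal ≤
        C * (eLpNorm f 2 volume).toReal ^ (1 - (d : ℝ) * α / m) *
          (eLpNorm (fun x => (‖x‖ ^ m : ℝ) • f x) 2 volume).toReal ^ ((d : ℝ) * α / m) := by
  have hdim : finrank ℝ (EuclideanSpace ℝ (Fin d)) = d := finrank_euclideanSpace_fin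
  have hm0 : (0:ℝ) < m := by exact_mod_cast hm
  have hd0 : (0:ℝ) < d := by exact_mod_cast hd
  have hq0 : 0 < q := by
    rcases hq with ⟨_, h1, _⟩ | ⟨hd2, h1, _⟩
    · linarith
    · have : (0:ℝ) < 2 * d / (d + 2 * m) := by positivity
      linarith
  have hq2 : q < 2 := by rcases hq with ⟨_, _, h⟩ | ⟨_, _, h⟩ <;> exact h
  have hα0 : 0 < α := by
    have h : 1/2 < 1/q := by rw [div_lt_div_iff₀ (by norm_num) hq0]; linarith
    rw [hα]; linarith
  have hdα : (d:ℝ) * α < m := by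
    have hαq : α * q = 1 - q / 2 := by rw [hα]; field_simp
    rcases hq with ⟨hd1, h1, _⟩ | ⟨hd2, h1, _⟩
    · have : α ≤ 1/2 := by
        have : 1/q ≤ 1 := by rw [div_le_one hq0]; linarith
        rw [hα]; linarith
      subst hd1
      push_cast
      have : (1:ℝ) ≤ m := by exact_mod_cast hm
      linarith
    · have hden : (0:ℝ) < d + 2 * m := by positivity
      have h2d : 2 * (d:ℝ) < q * (d + 2 * m) := by
        rw [div_lt_iff₀ hden] at h1; linarith
      nlinarith [mul_pos hd0 hα0]
  have hαm : (d:ℝ) * α / m < 1 := by rw [div_lt_one hm0]; exact hdα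
  have he0 : 0 < (d:ℝ) * α / m := by positivity
  set q' : ℝ≥0∞ := ENNReal.ofReal q with hq'def
  have hq'0 : q' ≠ 0 := by
    rw [hq'def, Ne, ENNReal.ofReal_eq_zero, not_le]; exact hq0
  set r : ℝ≥0∞ := ENNReal.ofReal α⁻¹ with hrdef
  have hr0 : r ≠ 0 := by
    rw [hrdef, Ne, ENNReal.ofReal_eq_zero, not_le]; exact inv_pos.mpr hα0
  have hrt : r ≠ ∞ := ENNReal.ofReal_ne_top
  have hrinv : 1 / r = ENNReal.ofReal α := by
    rw [hrdef, one_div, ← ENNReal.ofReal_inv_of_pos (inv_pos.mpr hα0), inv_inv]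
  have hrtoReal : (1 / r).toReal = α := by rw [hrinv, ENNReal.toReal_ofReal hα0.le]
  have hrR : r.toReal = α⁻¹ := by rw [hrdef, ENNReal.toReal_ofReal (inv_pos.mpr hα0).le]
  have hexp : 1 / q' = 1 / r + 1 / 2 := by
    rw [hrinv, hq'def, one_div, ← ENNReal.ofReal_inv_of_pos hq0,
      show (2:ℝ≥0∞) = ENNReal.ofReal 2 by simp,
      one_div, ← ENNReal.ofReal_inv_of_pos (by norm_num : (0:ℝ) < 2),
      ← ENNReal.ofReal_add hα0.le (by norm_num)]
    congr 1
    rw [hα]; ring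
  have hdr : ((finrank ℝ (EuclideanSpace ℝ (Fin d)) : ℕ) : ℝ) < m * r.toReal := by
    rw [hdim, hrR, ← div_eq_mul_inv, lt_div_iff₀ hα0]
    linarith [hdα]
  have hw1mem : MemLp (fun x : EuclideanSpace ℝ (Fin d) => (1 + ‖x‖ ^ m)⁻¹) r volume :=
    g1_mem volume m hr0 hrt hdr
  set w1 : ℝ≥0∞ := eLpNorm (fun x : EuclideanSpace ℝ (Fin d) => (1 + ‖x‖ ^ m)⁻¹) r volume
    with hw1def
  have hw1t : w1 ≠ ∞ := hw1mem.2.ne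
  refine ⟨2 * w1.toReal + 1, by positivity, ?_⟩
  intro f hf2 hfm2
  by_cases hf0 : f =ᵐ[volume] 0
  · constructor
    · exact (memLp_congr_ae hf0).mpr MemLp.zero
    · have hz : eLpNorm f q' volume = 0 := by rw [eLpNorm_congr_ae hf0, eLpNorm_zero]
      rw [hz, ENNReal.toReal_zero]
      positivity
  have hA0 : eLpNorm f 2 volume ≠ 0 := by
    rw [Ne, eLpNorm_eq_zero_iff hf2.1 (by norm_num)]; exact hf0
  have hnt : Nontrivial (EuclideanSpace ℝ (Fin d)) := by
    apply Module.nontrivial_of_finrank_pos (R := ℝ) (M := EuclideanSpace ℝ (Fin d))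
    rw [hdim]; exact hd
  have hB0 : eLpNorm (fun x => (‖x‖ ^ m : ℝ) • f x) 2 volume ≠ 0 := by
    rw [Ne, eLpNorm_eq_zero_iff hfm2.1 (by norm_num)]
    intro h
    apply hf0
    have hne : ∀ᵐ x ∂(volume : Measure (EuclideanSpace ℝ (Fin d))), x ≠ 0 := by
      rw [ae_iff]
      have : {x : EuclideanSpace ℝ (Fin d) | ¬ x ≠ 0} = {0} := by
        ext x; simp
      rw [this]
      exact measure_singleton 0
    filter_upwards [h, hne] with x hx hx0
    have hnx : (‖x‖ ^ m : ℝ) ≠ 0 := pow_ne_zero m (norm_ne_zero_iff.mpr hx0)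
    have hx' : (‖x‖ ^ m : ℝ) • f x = 0 := hx
    rcases smul_eq_zero.mp hx' with h' | h'
    · exact absurd h' hnx
    · exact h'
  have hAt : eLpNorm f 2 volume ≠ ∞ := hf2.2.ne
  have hBt : eLpNorm (fun x => (‖x‖ ^ m : ℝ) • f x) 2 volume ≠ ∞ := hfm2.2.ne
  set A : ℝ := (eLpNorm f 2 volume).toReal with hAdef
  set B : ℝ := (eLpNorm (fun x => (‖x‖ ^ m : ℝ) • f x) 2 volume).toReal with hBdef
  have hApos : 0 < A := ENNReal.toReal_pos hA0 hAt
  have hBpos : 0 < B := ENNReal.toReal_pos hB0 hBt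
  have hAeq : ENNReal.ofReal A = eLpNorm f 2 volume := ENNReal.ofReal_toReal hAt
  have hBeq : ENNReal.ofReal B = eLpNorm (fun x => (‖x‖ ^ m : ℝ) • f x) 2 volume :=
    ENNReal.ofReal_toReal hBt
  set R : ℝ := (B / A) ^ ((m:ℝ)⁻¹) with hRdef
  have hBA : 0 < B / A := div_pos hBpos hApos
  have hRpos : 0 < R := Real.rpow_pos_of_pos hBA _
  have hRm : R ^ m = B / A := by
    rw [hRdef, ← Real.rpow_natCast ((B / A) ^ ((m:ℝ)⁻¹)) m, ← Real.rpow_mul hBA.le,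
      inv_mul_cancel₀ hm0.ne', Real.rpow_one]
  set c : ℝ := (R⁻¹) ^ m with hcdef
  have hc0 : 0 ≤ c := by positivity
  have hcB : c * B = A := by
    rw [hcdef, inv_pow, hRm]
    field_simp
  set gR : EuclideanSpace ℝ (Fin d) → ℝ := fun x => (1 + ‖(R⁻¹ : ℝ) • x‖ ^ m)⁻¹ with hgRdef
  set h : EuclideanSpace ℝ (Fin d) → ℂ := fun x => ((1 + c * ‖x‖ ^ m : ℝ)) • f x with hhdef
  have hgRx : ∀ x, gR x = (1 + c * ‖x‖ ^ m)⁻¹ := by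
    intro x
    simp only [hgRdef, hcdef, norm_smul, Real.norm_eq_abs,
      abs_of_pos (inv_pos.mpr hRpos), mul_pow]
  have hfgh : f = fun x => gR x • h x := by
    funext x
    rw [hgRx x, hhdef]
    simp only
    rw [smul_smul, inv_mul_cancel₀ (by positivity), one_smul]
  have hcont : Continuous (fun x : EuclideanSpace ℝ (Fin d) => (1 + c * ‖x‖ ^ m : ℝ)) :=
    continuous_const.add (continuous_const.mul (continuous_norm.pow m))
  have hhm : AEStronglyMeasurable h volume := hcont.aestronglyMeasurable.smul hf2.1
  have hgRcont : Continuous gR := (g1_cont m).comp (continuous_const_smul (R⁻¹ : ℝ))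
  have hhint : eLpNorm h 2 volume ≤ ENNReal.ofReal A + ENNReal.ofReal c * ENNReal.ofReal B := by
    have hsplit : h = f + fun x => (c : ℝ) • ((‖x‖ ^ m : ℝ) • f x) := by
      funext x
      simp only [hhdef, Pi.add_apply]
      rw [add_smul, one_smul, smul_smul]
    rw [hsplit]
    refine le_trans (eLpNorm_add_le hf2.1 (hfm2.1.const_smul c) one_le_two) ?_
    have hs : eLpNorm (fun x => (c : ℝ) • ((‖x‖ ^ m : ℝ) • f x)) 2 volume =
        ENNReal.ofReal c * eLpNorm (fun x => (‖x‖ ^ m : ℝ) • f x) 2 volume := by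
      rw [show (fun x : EuclideanSpace ℝ (Fin d) => (c : ℝ) • ((‖x‖ ^ m : ℝ) • f x)) =
        (c : ℝ) • (fun x => (‖x‖ ^ m : ℝ) • f x) from rfl, eLpNorm_const_smul]
      simp [ENNReal.smul_def, Real.enorm_eq_ofReal hc0]
    rw [hs, hAeq, hBeq]
  have hHolder : eLpNorm f q' volume ≤ eLpNorm gR r volume * eLpNorm h 2 volume := by
    have hT : ENNReal.HolderTriple r 2 q' := ⟨by simp only [one_div] at hexp; exact hexp.symm⟩
    have hH := eLpNorm_smul_le_mul_eLpNorm (p := r) (q := 2) (r := q') (μ := volume) hhm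
      hgRcont.aestronglyMeasurable
    rw [hfgh]
    exact hH
  have hscale : eLpNorm gR r volume = ENNReal.ofReal (R ^ ((d:ℝ) * α)) * w1 := by
    rw [hgRdef, g1_scale volume m hrt hRpos, hdim, hrtoReal, ← hw1def]
    congr 1
    rw [ENNReal.ofReal_rpow_of_nonneg (by positivity) hα0.le]
    congr 1
    rw [← Real.rpow_natCast R d, ← Real.rpow_mul hRpos.le]
  have hchain : eLpNorm f q' volume ≤
      ENNReal.ofReal (R ^ ((d:ℝ) * α)) * w1 * ENNReal.ofReal (2 * A) := by
    calc eLpNorm f q' volume ≤ eLpNorm gR r volume * eLpNorm h 2 volume := hHolder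
      _ ≤ ENNReal.ofReal (R ^ ((d:ℝ) * α)) * w1 *
          (ENNReal.ofReal A + ENNReal.ofReal c * ENNReal.ofReal B) := by
          rw [hscale]; exact mul_le_mul_right hhint _
      _ = ENNReal.ofReal (R ^ ((d:ℝ) * α)) * w1 * ENNReal.ofReal (2 * A) := by
          rw [← ENNReal.ofReal_mul hc0, hcB, ← ENNReal.ofReal_add hApos.le hApos.le]
          congr 2
          ring
  have hfin : ENNReal.ofReal (R ^ ((d:ℝ) * α)) * w1 * ENNReal.ofReal (2 * A) ≠ ∞ :=
    ENNReal.mul_ne_top (ENNReal.mul_ne_top ENNReal.ofReal_ne_top hw1t) ENNReal.ofReal_ne_top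
  refine ⟨⟨hf2.1, lt_of_le_of_lt hchain (lt_top_iff_ne_top.mpr hfin)⟩, ?_⟩
  refine le_trans (ENNReal.toReal_mono hfin hchain) ?_
  rw [ENNReal.toReal_mul, ENNReal.toReal_mul, ENNReal.toReal_ofReal (by positivity),
    ENNReal.toReal_ofReal (by positivity)]
  set e : ℝ := (d:ℝ) * α / m with hedef
  have hRe : R ^ ((d:ℝ) * α) = B ^ e / A ^ e := by
    rw [hRdef, ← Real.rpow_mul hBA.le,
      show (m:ℝ)⁻¹ * ((d:ℝ) * α) = e from by rw [hedef]; ring,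
      Real.div_rpow hBpos.le hApos.le]
  have hA1e : A ^ (1 - e) = A / A ^ e := by
    rw [Real.rpow_sub hApos, Real.rpow_one]
  rw [hRe, hA1e]
  have hAe : 0 < A ^ e := Real.rpow_pos_of_pos hApos e
  have hBe : 0 ≤ B ^ e := Real.rpow_nonneg hBpos.le e
  have hw1nn : 0 ≤ w1.toReal := ENNReal.toReal_nonneg
  calc B ^ e / A ^ e * w1.toReal * (2 * A) = 2 * w1.toReal * (A * B ^ e / A ^ e) := by ring
    _ ≤ (2 * w1.toReal + 1) * (A * B ^ e / A ^ e) := by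
        apply mul_le_mul_of_nonneg_right (by linarith) (by positivity)
    _ = (2 * w1.toReal + 1) * (A / A ^ e) * B ^ e := by ring
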